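/- The 4×4 matrix M̂ = [[2,3,3,1],[0,2,1,0],[1,2,1,0],[1,1,1,0]] has the same eigenvalues τ³, τ, σ, σ³ as M = [[1,2,2,2],[0,2,1,0],[1,2,1,1],[1,1,1,1]], where τ = (1+√5)/2, σ = (1−√5)/2. -/

import Mathlib

open Polynomial Matrix

lemma charpoly_eval_aux (A : Matrix (Fin 4) (Fin 4) ℝ)
    (B : Matrix (Fin 4) (Fin 4) ℝ)
    (hB : (charmatrix A).map (Polynomial.evalRingHom x) = B) :
    A.charpoly.eval x = B.det := by
  rw [Matrix.charpoly, ← Polynomial.coe_evalRingHom, RingHom.map_det,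
    RingHom.mapMatrix_apply, hB]

theorem modified_inflation_matrix_same_eigenvalues
    (τ σ : ℝ) (hτ : τ = (1 + Real.sqrt 5) / 2) (hσ : σ = (1 - Real.sqrt 5) / 2)
    (M M' : Matrix (Fin 4) (Fin 4) ℝ)
    (hM : M = !![1,2,2,2; 0,2,1,0; 1,2,1,1; 1,1,1,1])
    (hM' : M' = !![2,3,3,1; 0,2,1,0; 1,2,1,0; 1,1,1,0]) :
    (∀ x : ℝ, M'.charpoly.IsRoot x ↔ (x = τ ^ 3 ∨ x = τ ∨ x = σ ∨ x = σ ^ 3)) ∧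
    (∀ x : ℝ, M.charpoly.IsRoot x ↔ (x = τ ^ 3 ∨ x = τ ∨ x = σ ∨ x = σ ^ 3)) := by
  have hs : Real.sqrt 5 ^ 2 = 5 := Real.sq_sqrt (by norm_num)
  set s := Real.sqrt 5 with hsdef
  -- common factorization
  have key : ∀ x : ℝ, x ^ 4 - 5 * x ^ 3 + 2 * x ^ 2 + 5 * x + 1
      = (x - τ ^ 3) * (x - τ) * (x - σ) * (x - σ ^ 3) := by
    intro x
    subst hτ hσ
    linear_combination ((3/4 : ℝ) * x ^ 3
      + (-19/64 + 1/32 * s ^ 2 + 1/64 * s ^ 4) * x ^ 2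
      + (-65/64 - 7/32 * s ^ 2 - 1/64 * s ^ 4) * x
      + (-51/256 - 11/256 * s ^ 2 - 1/256 * s ^ 4 - 1/256 * s ^ 6)) * hs
  have hroot : ∀ x : ℝ,
      ((x - τ ^ 3) * (x - τ) * (x - σ) * (x - σ ^ 3) = 0)
        ↔ (x = τ ^ 3 ∨ x = τ ∨ x = σ ∨ x = σ ^ 3) := by
    intro x
    simp [mul_eq_zero, sub_eq_zero, or_assoc]
  have hevM : ∀ x : ℝ, M.charpoly.eval x = x ^ 4 - 5 * x ^ 3 + 2 * x ^ 2 + 5 * x + 1 := by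
    intro x
    subst hM
    rw [charpoly_eval_aux _ (!![x-1,-2,-2,-2; 0,x-2,-1,0; -1,-2,x-1,-1; -1,-1,-1,x-1]) ?_,
      Matrix.det_succ_row_zero]
    · simp [Fin.sum_univ_succ, Matrix.det_fin_three, Fin.succ_succAbove_zero, Fin.succ_succAbove_succ,
        Fin.succAbove_castSucc_of_lt, Fin.succAbove_of_le_castSucc, Matrix.submatrix, Fin.succAbove_last,
        (by decide : Fin.succAbove (3 : Fin 4) (2 : Fin 3) = 2)]
      ring
    · ext i j
      fin_cases i <;> fin_cases j <;>
        simp [charmatrix_apply, Matrix.vecHead, Matrix.vecTail]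
  have hevM' : ∀ x : ℝ, M'.charpoly.eval x = x ^ 4 - 5 * x ^ 3 + 2 * x ^ 2 + 5 * x + 1 := by
    intro x
    subst hM'
    rw [charpoly_eval_aux _ (!![x-2,-3,-3,-1; 0,x-2,-1,0; -1,-2,x-1,0; -1,-1,-1,x]) ?_,
      Matrix.det_succ_row_zero]
    · simp [Fin.sum_univ_succ, Matrix.det_fin_three, Fin.succ_succAbove_zero, Fin.succ_succAbove_succ,
        Fin.succAbove_castSucc_of_lt, Fin.succAbove_of_le_castSucc, Matrix.submatrix, Fin.succAbove_last,
        (by decide : Fin.succAbove (3 : Fin 4) (2 : Fin 3) = 2)]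
      ring
    · ext i j
      fin_cases i <;> fin_cases j <;>
        simp [charmatrix_apply, Matrix.vecHead, Matrix.vecTail]
  constructor
  · intro x
    rw [Polynomial.IsRoot, hevM' x, key x, hroot x]
  · intro x
    rw [Polynomial.IsRoot, hevM x, key x, hroot x]
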